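/- Potential-based reward shaping preserves optimal policies: for an MDP with discount γ and reward r, adding the shaping reward F(s,a,s') = γΦ(s') − Φ(s) changes the optimal action-value function by the state-dependent constant −Φ(s), i.e., Q'*(s,a) = Q*(s,a) − Φ(s); consequently the set of greedy (optimal) actions at every state is unchanged. -/
import Mathlib


open Finset

/-- Potential-based reward shaping preserves optimal policies:
the shaped optimal action-value function satisfies Q'*(s,a) = Q*(s,a) − Φ(s),
hence the greedy action sets are unchanged. -/
theorem reward_shaping_preserves_optimal_policy
    {S A : Type*} [Fintype S] [Fintype A] [Nonempty S] [Nonempty A]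
    (p : S → A → S → ℝ)
    (hp0 : ∀ s a s', 0 ≤ p s a s')
    (hp1 : ∀ s a, ∑ s', p s a s' = 1)
    (r : S → A → S → ℝ) (γ : ℝ) (hγ0 : 0 ≤ γ) (hγ1 : γ < 1)
    (Φ : S → ℝ)
    (Q Q' : S → A → ℝ)
    (hQ : ∀ s a, Q s a =
      ∑ s', p s a s' * (r s a s' + γ * (univ.sup' univ_nonempty fun a' => Q s' a')))
    (hQ' : ∀ s a, Q' s a =
      ∑ s', p s a s' *
        ((r s a s' + γ * Φ s' - Φ s) + γ * (univ.sup' univ_nonempty fun a' => Q' s' a'))) :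
    (∀ s a, Q' s a = Q s a - Φ s) ∧
    (∀ s : S, {a : A | ∀ b, Q' s b ≤ Q' s a} = {a : A | ∀ b, Q s b ≤ Q s a}) := by
  set D : S → A → ℝ := fun s a => Q' s a - Q s a + Φ s with hD
  set M : ℝ := (univ : Finset (S × A)).sup' univ_nonempty
      (fun x => |D x.1 x.2|) with hM
  have hMD : ∀ s a, |D s a| ≤ M := by
    intro s a
    exact Finset.le_sup' (f := fun x : S × A => |D x.1 x.2|) (b := (s, a)) (mem_univ _)
  have hM0 : 0 ≤ M := le_trans (abs_nonneg _) (hMD Classical.ofNonempty Classical.ofNonempty)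
  -- sup difference bound
  have hsup : ∀ s : S,
      |(univ.sup' univ_nonempty fun a' => Q' s a') -
        (univ.sup' univ_nonempty fun a' => Q s a') + Φ s| ≤ M := by
    intro s
    rw [abs_le]
    constructor
    · have h1 : (univ.sup' univ_nonempty fun a' => Q s a') ≤
          (univ.sup' univ_nonempty fun a' => Q' s a') + Φ s + M := by
        apply Finset.sup'_le
        intro a _
        have := (abs_le.mp (hMD s a)).1
        have h2 : Q' s a ≤ univ.sup' univ_nonempty fun a' => Q' s a' :=
          Finset.le_sup' _ (mem_univ a)
        simp only [hD] at this
        linarith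
      linarith
    · have h1 : (univ.sup' univ_nonempty fun a' => Q' s a') ≤
          (univ.sup' univ_nonempty fun a' => Q s a') - Φ s + M := by
        apply Finset.sup'_le
        intro a _
        have := (abs_le.mp (hMD s a)).2
        have h2 : Q s a ≤ univ.sup' univ_nonempty fun a' => Q s a' :=
          Finset.le_sup' _ (mem_univ a)
        simp only [hD] at this
        linarith
      linarith
  -- key identity
  have hkey : ∀ s a, D s a = γ * ∑ s', p s a s' *
      ((univ.sup' univ_nonempty fun a' => Q' s' a') -
        (univ.sup' univ_nonempty fun a' => Q s' a') + Φ s') := by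
    intro s a
    have split : (∑ s', p s a s' *
          ((r s a s' + γ * Φ s' - Φ s) + γ * (univ.sup' univ_nonempty fun a' => Q' s' a')))
        = (∑ s', p s a s' *
          ((r s a s' + γ * Φ s') + γ * (univ.sup' univ_nonempty fun a' => Q' s' a'))) - Φ s := by
      have h1 : (∑ s', p s a s' *
            ((r s a s' + γ * Φ s' - Φ s) + γ * (univ.sup' univ_nonempty fun a' => Q' s' a')))
          = ∑ s', (p s a s' *
            ((r s a s' + γ * Φ s') + γ * (univ.sup' univ_nonempty fun a' => Q' s' a'))
            - p s a s' * Φ s) := Finset.sum_congr rfl fun s' _ => by ring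
      rw [h1, Finset.sum_sub_distrib, ← Finset.sum_mul, hp1, one_mul]
    have hmain : (∑ s', p s a s' *
          ((r s a s' + γ * Φ s') + γ * (univ.sup' univ_nonempty fun a' => Q' s' a')))
        - (∑ s', p s a s' * (r s a s' + γ * (univ.sup' univ_nonempty fun a' => Q s' a')))
        = γ * ∑ s', p s a s' *
          ((univ.sup' univ_nonempty fun a' => Q' s' a') -
            (univ.sup' univ_nonempty fun a' => Q s' a') + Φ s') := by
      rw [Finset.mul_sum, ← Finset.sum_sub_distrib]
      exact Finset.sum_congr rfl fun s' _ => by ring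
    simp only [hD]
    rw [hQ s a, hQ' s a, split]
    linarith [hmain]
  -- contraction bound
  have hbound : ∀ s a, |D s a| ≤ γ * M := by
    intro s a
    rw [hkey s a, abs_mul, abs_of_nonneg hγ0]
    apply mul_le_mul_of_nonneg_left _ hγ0
    calc |∑ s', p s a s' * ((univ.sup' univ_nonempty fun a' => Q' s' a') -
          (univ.sup' univ_nonempty fun a' => Q s' a') + Φ s')|
        ≤ ∑ s', |p s a s' * ((univ.sup' univ_nonempty fun a' => Q' s' a') -
          (univ.sup' univ_nonempty fun a' => Q s' a') + Φ s')| :=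
          Finset.abs_sum_le_sum_abs _ _
      _ ≤ ∑ s', p s a s' * M := by
          apply Finset.sum_le_sum
          intro s' _
          rw [abs_mul, abs_of_nonneg (hp0 s a s')]
          exact mul_le_mul_of_nonneg_left (hsup s') (hp0 s a s')
      _ = M := by rw [← Finset.sum_mul, hp1, one_mul]
  have hMγ : M ≤ γ * M := by
    apply Finset.sup'_le
    intro x _
    exact hbound x.1 x.2
  have hMzero : M = 0 := by nlinarith
  have hzero : ∀ s a, Q' s a = Q s a - Φ s := by
    intro s a
    have := hMD s a
    rw [hMzero] at this
    have h := abs_nonpos_iff.mp this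
    simp only [hD] at h
    linarith
  refine ⟨hzero, fun s => ?_⟩
  ext a
  simp only [Set.mem_setOf_eq, hzero]
  constructor <;> intro h b <;> have := h b <;> linarith
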